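/- arXiv:1210.5719 — 4 statements merged into one kernel-verified Lean document; each statement's English description precedes it below -/
import Mathlib

section
/- For every real α ≥ 2, ∫_{ℝ²} 2α² |y|^{α-2}/(1+|y|^α)² · (1-|y|^α)/(1+|y|^α) dy = 0. -/
open Real MeasureTheory Filter Set Topology

private lemma tendsto_inv_pow_aux (α : ℝ) (hαpos : (0:ℝ) < α) (n : ℕ) (hn : 0 < n) :
    Tendsto (fun y : ℝ => ((1 + y ^ α) ^ n)⁻¹) atTop (nhds 0) := by
  apply Tendsto.inv_tendsto_atTop
  exact (tendsto_pow_atTop hn.ne').comp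
    (tendsto_atTop_add_const_left _ 1 (tendsto_rpow_atTop hαpos))

private lemma cont_den_aux (α : ℝ) (hαpos : (0:ℝ) < α) :
    ContinuousAt (fun y : ℝ => 1 + y ^ α) 0 :=
  continuousAt_const.add (Real.continuousAt_rpow_const 0 α (Or.inr hαpos.le))

private lemma hasDerivAt_den (α : ℝ) (hαpos : (0:ℝ) < α) (y : ℝ) (hy : 0 < y) :
    HasDerivAt (fun y : ℝ => 1 + y ^ α) (α * y ^ (α - 1)) y := by
  simpa using (Real.hasDerivAt_rpow_const (Or.inl hy.ne')).const_add 1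

private lemma hasDerivAt_G1 (α : ℝ) (hαpos : (0:ℝ) < α) (y : ℝ) (hy : 0 < y) :
    HasDerivAt (fun y : ℝ => -α / (1 + y ^ α) ^ 2)
      (2 * α ^ 2 * y ^ (α - 1) / (1 + y ^ α) ^ 3) y := by
  have hden : 0 < 1 + y ^ α := by positivity
  have h1 := hasDerivAt_den α hαpos y hy
  have h2 := ((h1.pow 2).inv (by exact pow_ne_zero 2 hden.ne')).const_mul (-α)
  refine h2.congr_deriv ?_
  simp only [Pi.pow_apply]
  field_simp
  ring

private lemma hasDerivAt_G2 (α : ℝ) (hαpos : (0:ℝ) < α) (y : ℝ) (hy : 0 < y) :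
    HasDerivAt (fun y : ℝ => α / (1 + y ^ α) ^ 2 - 2 * α / (1 + y ^ α))
      (2 * α ^ 2 * y ^ (2 * α - 1) / (1 + y ^ α) ^ 3) y := by
  have hden : 0 < 1 + y ^ α := by positivity
  have h1 := hasDerivAt_den α hαpos y hy
  have h2 := ((h1.pow 2).inv (by exact pow_ne_zero 2 hden.ne')).const_mul α
  have h3 := (h1.inv hden.ne').const_mul (2 * α)
  have h4 := h2.sub h3
  refine h4.congr_deriv ?_
  have e2 : y ^ (2 * α - 1) = y ^ (α - 1) * y ^ α := by
    rw [show 2 * α - 1 = (α - 1) + α by ring, Real.rpow_add hy]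
  rw [e2]
  simp only [Pi.pow_apply]
  field_simp
  ring

private lemma cont_G1 (α : ℝ) (hαpos : (0:ℝ) < α) :
    ContinuousWithinAt (fun y : ℝ => -α / (1 + y ^ α) ^ 2) (Ici 0) 0 := by
  apply ContinuousAt.continuousWithinAt
  have h0 : (1 + (0:ℝ) ^ α) ^ 2 ≠ 0 := by
    rw [Real.zero_rpow hαpos.ne']; norm_num
  exact continuousAt_const.div ((cont_den_aux α hαpos).pow 2) h0

private lemma cont_G2 (α : ℝ) (hαpos : (0:ℝ) < α) :
    ContinuousWithinAt (fun y : ℝ => α / (1 + y ^ α) ^ 2 - 2 * α / (1 + y ^ α)) (Ici 0) 0 := by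
  apply ContinuousAt.continuousWithinAt
  have h0 : (1 + (0:ℝ) ^ α) ≠ 0 := by
    rw [Real.zero_rpow hαpos.ne']; norm_num
  have h0' : (1 + (0:ℝ) ^ α) ^ 2 ≠ 0 := pow_ne_zero 2 h0
  exact (continuousAt_const.div ((cont_den_aux α hαpos).pow 2) h0').sub
    (continuousAt_const.div (cont_den_aux α hαpos) h0)

private lemma tendsto_G1 (α : ℝ) (hαpos : (0:ℝ) < α) :
    Tendsto (fun y : ℝ => -α / (1 + y ^ α) ^ 2) atTop (nhds 0) := by
  have := (tendsto_inv_pow_aux α hαpos 2 two_pos).const_mul (-α)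
  simpa [div_eq_mul_inv] using this

private lemma tendsto_G2 (α : ℝ) (hαpos : (0:ℝ) < α) :
    Tendsto (fun y : ℝ => α / (1 + y ^ α) ^ 2 - 2 * α / (1 + y ^ α)) atTop (nhds 0) := by
  have h1 := (tendsto_inv_pow_aux α hαpos 2 two_pos).const_mul α
  have h2 := (tendsto_inv_pow_aux α hαpos 1 one_pos).const_mul (2 * α)
  have := h1.sub h2
  simpa [div_eq_mul_inv] using this

private lemma pos_G1' (α : ℝ) (hαpos : (0:ℝ) < α) :
    ∀ y ∈ Ioi (0:ℝ), 0 ≤ 2 * α ^ 2 * y ^ (α - 1) / (1 + y ^ α) ^ 3 := by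
  intro y hy
  have hy : 0 < y := hy
  positivity

private lemma pos_G2' (α : ℝ) (hαpos : (0:ℝ) < α) :
    ∀ y ∈ Ioi (0:ℝ), 0 ≤ 2 * α ^ 2 * y ^ (2 * α - 1) / (1 + y ^ α) ^ 3 := by
  intro y hy
  have hy : 0 < y := hy
  positivity

private lemma aux1 (α : ℝ) (hαpos : (0:ℝ) < α) :
    ∫ y in Ioi (0:ℝ), 2 * α ^ 2 * y ^ (α - 1) / (1 + y ^ α) ^ 3 = α := by
  have := integral_Ioi_of_hasDerivAt_of_nonneg (cont_G1 α hαpos)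
    (fun y hy => hasDerivAt_G1 α hαpos y hy) (pos_G1' α hαpos) (tendsto_G1 α hαpos)
  rw [this]
  simp [Real.zero_rpow hαpos.ne']

private lemma aux2 (α : ℝ) (hαpos : (0:ℝ) < α) :
    ∫ y in Ioi (0:ℝ), 2 * α ^ 2 * y ^ (2 * α - 1) / (1 + y ^ α) ^ 3 = α := by
  have := integral_Ioi_of_hasDerivAt_of_nonneg (cont_G2 α hαpos)
    (fun y hy => hasDerivAt_G2 α hαpos y hy) (pos_G2' α hαpos) (tendsto_G2 α hαpos)
  rw [this]
  rw [Real.zero_rpow hαpos.ne']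
  ring

private lemma aux1int (α : ℝ) (hαpos : (0:ℝ) < α) :
    IntegrableOn (fun y => 2 * α ^ 2 * y ^ (α - 1) / (1 + y ^ α) ^ 3) (Ioi (0:ℝ)) :=
  integrableOn_Ioi_deriv_of_nonneg (cont_G1 α hαpos)
    (fun y hy => hasDerivAt_G1 α hαpos y hy) (pos_G1' α hαpos) (tendsto_G1 α hαpos)

private lemma aux2int (α : ℝ) (hαpos : (0:ℝ) < α) :
    IntegrableOn (fun y => 2 * α ^ 2 * y ^ (2 * α - 1) / (1 + y ^ α) ^ 3) (Ioi (0:ℝ)) :=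
  integrableOn_Ioi_deriv_of_nonneg (cont_G2 α hαpos)
    (fun y hy => hasDerivAt_G2 α hαpos y hy) (pos_G2' α hαpos) (tendsto_G2 α hαpos)

private lemma aux_main (α : ℝ) (hαpos : (0:ℝ) < α) :
    ∫ y in Ioi (0:ℝ),
      y * (2 * α ^ 2 * y ^ (α - 2) / (1 + y ^ α) ^ 2 * ((1 - y ^ α) / (1 + y ^ α))) = 0 := by
  have hcongr : ∀ y ∈ Ioi (0:ℝ),
      y * (2 * α ^ 2 * y ^ (α - 2) / (1 + y ^ α) ^ 2 * ((1 - y ^ α) / (1 + y ^ α)))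
        = 2 * α ^ 2 * y ^ (α - 1) / (1 + y ^ α) ^ 3
          - 2 * α ^ 2 * y ^ (2 * α - 1) / (1 + y ^ α) ^ 3 := by
    intro y hy
    have hy : 0 < y := hy
    have hden : 0 < 1 + y ^ α := by positivity
    have e1 : y ^ (α - 1) = y * y ^ (α - 2) := by
      rw [show α - 1 = 1 + (α - 2) by ring, Real.rpow_add hy, Real.rpow_one]
    have e2 : y ^ (2 * α - 1) = y * y ^ (α - 2) * y ^ α := by
      rw [show 2 * α - 1 = (1 + (α - 2)) + α by ring, Real.rpow_add hy,
        Real.rpow_add hy, Real.rpow_one]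
    rw [e1, e2]
    field_simp
  rw [setIntegral_congr_fun measurableSet_Ioi hcongr,
    integral_sub (aux1int α hαpos) (aux2int α hαpos), aux1 α hαpos, aux2 α hαpos, sub_self]

theorem stmt2 (α : ℝ) (hα : 2 ≤ α) :
    ∫ y : EuclideanSpace ℝ (Fin 2),
      2 * α ^ 2 * ‖y‖ ^ (α - 2) / (1 + ‖y‖ ^ α) ^ 2 * ((1 - ‖y‖ ^ α) / (1 + ‖y‖ ^ α)) = 0 := by
  have hαpos : (0:ℝ) < α := lt_of_lt_of_le two_pos hα
  have key := integral_fun_norm_addHaar (volume : Measure (EuclideanSpace ℝ (Fin 2)))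
    (fun r : ℝ => 2 * α ^ 2 * r ^ (α - 2) / (1 + r ^ α) ^ 2 * ((1 - r ^ α) / (1 + r ^ α)))
  simp only [finrank_euclideanSpace_fin, smul_eq_mul] at key
  rw [key]
  have : ∫ y in Ioi (0:ℝ),
      y ^ (2 - 1) * (2 * α ^ 2 * y ^ (α - 2) / (1 + y ^ α) ^ 2 * ((1 - y ^ α) / (1 + y ^ α)))
      = 0 := by
    simpa using aux_main α hαpos
  rw [this]
  simp
end

section
/- For every real α ≥ 2, ∫_{ℝ²} 2α² |y|^{α-2}/(1+|y|^α)² · (1-|y|^α)/(1+|y|^α) · ln((1+|y|^α)²) dy = -4πα. -/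
open Real MeasureTheory Set Filter Topology

private lemma F_hasDeriv (α : ℝ) (hα : 2 ≤ α) {x : ℝ} (hx : 0 < x) :
    HasDerivAt (fun r : ℝ => 4 * α * (Real.log (1 + r ^ α) * ((1 + r ^ α)⁻¹ - ((1 + r ^ α) ^ 2)⁻¹)
        + (1 + r ^ α)⁻¹ - 2⁻¹ * ((1 + r ^ α) ^ 2)⁻¹))
      (x * (2 * α ^ 2 * x ^ (α - 2) / (1 + x ^ α) ^ 2 * ((1 - x ^ α) / (1 + x ^ α)) *
        Real.log ((1 + x ^ α) ^ 2))) x := by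
  have hxα : (0:ℝ) < x ^ α := Real.rpow_pos_of_pos hx α
  have hu : (0:ℝ) < 1 + x ^ α := by linarith
  have hune : (1 + x ^ α) ≠ 0 := ne_of_gt hu
  have hpow : HasDerivAt (fun r : ℝ => r ^ α) (α * x ^ (α - 1)) x :=
    Real.hasDerivAt_rpow_const (Or.inl hx.ne')
  have hu' : HasDerivAt (fun r : ℝ => 1 + r ^ α) (α * x ^ (α - 1)) x := hpow.const_add 1
  have hlog : HasDerivAt (fun r : ℝ => Real.log (1 + r ^ α)) ((α * x ^ (α - 1)) / (1 + x ^ α)) x :=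
    hu'.log hune
  have hinv : HasDerivAt (fun r : ℝ => (1 + r ^ α)⁻¹)
      (-(α * x ^ (α - 1)) / (1 + x ^ α) ^ 2) x := hu'.inv hune
  have hsq : HasDerivAt (fun r : ℝ => (1 + r ^ α) ^ 2)
      ((2 : ℕ) * (1 + x ^ α) ^ 1 * (α * x ^ (α - 1))) x := hu'.pow 2
  have hsqinv : HasDerivAt (fun r : ℝ => ((1 + r ^ α) ^ 2)⁻¹)
      (-((2 : ℕ) * (1 + x ^ α) ^ 1 * (α * x ^ (α - 1))) / ((1 + x ^ α) ^ 2) ^ 2) x :=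
    hsq.inv (by positivity)
  have H := (((hlog.mul (hinv.sub hsqinv)).add hinv).sub (hsqinv.const_mul 2⁻¹)).const_mul (4 * α)
  convert H using 1
  · rfl
  · rfl
  · rfl
  have h1 : x ^ (α - 1) = x ^ (α - 2) * x := by
    rw [show α - 1 = (α - 2) + 1 by ring, Real.rpow_add_one hx.ne']
  have h2 : Real.log ((1 + x ^ α) ^ 2) = 2 * Real.log (1 + x ^ α) := by
    rw [Real.log_pow]; norm_num
  rw [h1, h2]
  simp only [Pi.sub_apply]
  field_simp
  ring

private lemma F_tendsto (α : ℝ) (hα : 2 ≤ α) :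
    Tendsto (fun r : ℝ => 4 * α * (Real.log (1 + r ^ α) * ((1 + r ^ α)⁻¹ - ((1 + r ^ α) ^ 2)⁻¹)
        + (1 + r ^ α)⁻¹ - 2⁻¹ * ((1 + r ^ α) ^ 2)⁻¹)) atTop (𝓝 0) := by
  have hu_top : Tendsto (fun r : ℝ => 1 + r ^ α) atTop atTop :=
    tendsto_atTop_add_const_left _ 1 (tendsto_rpow_atTop (by linarith))
  have hlt : Tendsto (fun t : ℝ => Real.log t * t⁻¹) atTop (𝓝 0) := by
    simpa [div_eq_mul_inv] using Real.isLittleO_log_id_atTop.tendsto_div_nhds_zero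
  have hinv0 : Tendsto (fun t : ℝ => t⁻¹) atTop (𝓝 (0:ℝ)) := tendsto_inv_atTop_zero
  have hG : Tendsto (fun t : ℝ => 4 * α * (Real.log t * (t⁻¹ - (t ^ 2)⁻¹)
      + t⁻¹ - 2⁻¹ * (t ^ 2)⁻¹)) atTop (𝓝 0) := by
    have : Tendsto (fun t : ℝ => 4 * α * ((Real.log t * t⁻¹) * (1 - t⁻¹)
        + t⁻¹ - 2⁻¹ * (t⁻¹ * t⁻¹))) atTop
        (𝓝 (4 * α * ((0 : ℝ) * (1 - 0) + 0 - 2⁻¹ * (0 * 0)))) := by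
      exact (((hlt.mul (tendsto_const_nhds.sub hinv0)).add hinv0).sub
        ((hinv0.mul hinv0).const_mul 2⁻¹)).const_mul (4 * α)
    have h0 : (4 * α * ((0 : ℝ) * (1 - 0) + 0 - 2⁻¹ * (0 * 0))) = 0 := by ring
    rw [h0] at this
    refine this.congr fun t => ?_
    have : (t ^ 2 : ℝ)⁻¹ = t⁻¹ * t⁻¹ := by rw [sq, mul_inv]
    rw [this]; ring
  exact hG.comp hu_top

private lemma radial_integral (α : ℝ) (hα : 2 ≤ α) :
    ∫ r in Ioi (0:ℝ), r * (2 * α ^ 2 * r ^ (α - 2) / (1 + r ^ α) ^ 2 *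
      ((1 - r ^ α) / (1 + r ^ α)) * Real.log ((1 + r ^ α) ^ 2)) = -(2 * α) := by
  set F : ℝ → ℝ := fun r => 4 * α * (Real.log (1 + r ^ α) * ((1 + r ^ α)⁻¹ - ((1 + r ^ α) ^ 2)⁻¹)
        + (1 + r ^ α)⁻¹ - 2⁻¹ * ((1 + r ^ α) ^ 2)⁻¹) with hF
  set g : ℝ → ℝ := fun r => r * (2 * α ^ 2 * r ^ (α - 2) / (1 + r ^ α) ^ 2 *
      ((1 - r ^ α) / (1 + r ^ α)) * Real.log ((1 + r ^ α) ^ 2)) with hg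
  have hα0 : (0:ℝ) < α := by linarith
  have hderiv : ∀ x ∈ Ioi (0:ℝ), HasDerivAt F (g x) x := fun x hx => F_hasDeriv α hα hx
  -- continuity of F at 0 (indeed everywhere on [0,∞))
  have hcont0 : ContinuousWithinAt F (Ici 0) 0 := by
    have hc : ContinuousAt (fun r : ℝ => r ^ α) 0 :=
      Real.continuousAt_rpow_const 0 α (Or.inr hα0.le)
    have h00 : (0:ℝ) ^ α = 0 := Real.zero_rpow hα0.ne'
    have : ContinuousAt F 0 := by
      apply ContinuousAt.mul continuousAt_const
      have hu : ContinuousAt (fun r : ℝ => 1 + r ^ α) 0 := continuousAt_const.add hc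
      have hune : (fun r : ℝ => 1 + r ^ α) 0 ≠ 0 := by simp [h00]
      have hsqne : ((fun r : ℝ => 1 + r ^ α) 0) ^ 2 ≠ 0 := pow_ne_zero _ hune
      exact (((hu.log hune).mul ((hu.inv₀ hune).sub ((hu.pow 2).inv₀ hsqne))).add
        (hu.inv₀ hune)).sub (continuousAt_const.mul ((hu.pow 2).inv₀ hsqne))
    exact this.continuousWithinAt
  have htop : Tendsto F atTop (𝓝 0) := F_tendsto α hα
  -- integrability of g on (0,1]
  have hint1 : IntegrableOn g (Ioc 0 1) := by
    have hcpow1 : Continuous fun r : ℝ => r ^ (α - 1) := continuous_iff_continuousAt.2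
      fun x => Real.continuousAt_rpow_const x _ (Or.inr (by linarith : (0:ℝ) ≤ α - 1))
    have hcpow : Continuous fun r : ℝ => r ^ α := continuous_iff_continuousAt.2
      fun x => Real.continuousAt_rpow_const x _ (Or.inr hα0.le)
    have hne : ∀ x ∈ Icc (0:ℝ) 1, (1 + x ^ α) ≠ 0 := by
      intro x hx
      have := Real.rpow_nonneg hx.1 α
      positivity
    have hcont : ContinuousOn (fun r : ℝ => 2 * α ^ 2 * r ^ (α - 1) *
        ((1 - r ^ α) / (1 + r ^ α) ^ 3) * Real.log ((1 + r ^ α) ^ 2)) (Icc 0 1) := by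
      refine ContinuousOn.mul (ContinuousOn.mul ?_ ?_) ?_
      · exact (continuous_const.mul hcpow1).continuousOn
      · exact ContinuousOn.div (continuous_const.sub hcpow).continuousOn
          ((continuous_const.add hcpow).pow 3).continuousOn
          (fun x hx => pow_ne_zero _ (hne x hx))
      · exact ContinuousOn.log ((continuous_const.add hcpow).pow 2).continuousOn
          (fun x hx => pow_ne_zero _ (hne x hx))
    have hI : IntegrableOn (fun r : ℝ => 2 * α ^ 2 * r ^ (α - 1) *
        ((1 - r ^ α) / (1 + r ^ α) ^ 3) * Real.log ((1 + r ^ α) ^ 2)) (Ioc 0 1) :=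
      (hcont.integrableOn_Icc).mono_set Ioc_subset_Icc_self
    refine hI.congr_fun (fun x hx => ?_) measurableSet_Ioc
    have hx0 : 0 < x := hx.1
    have hxα : (0:ℝ) < x ^ α := Real.rpow_pos_of_pos hx0 α
    have hune : (1 + x ^ α) ≠ 0 := by positivity
    have h1 : x ^ (α - 1) = x ^ (α - 2) * x := by
      rw [show α - 1 = (α - 2) + 1 by ring, Real.rpow_add_one hx0.ne']
    rw [hg]
    simp only
    rw [h1]
    field_simp
  -- integrability of g on (1,∞) : g is nonpositive there
  have hint2 : IntegrableOn g (Ioi 1) := by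
    refine integrableOn_Ioi_deriv_of_nonpos (a := 1)
      ((hderiv 1 (by norm_num)).continuousAt.continuousWithinAt)
      (fun x hx => hderiv x (show (0:ℝ) < x from lt_trans one_pos hx)) (fun x hx => ?_) htop
    have hx0 : (0:ℝ) < x := lt_trans one_pos hx
    have hxα : (1:ℝ) ≤ x ^ α := Real.one_le_rpow (le_of_lt hx) hα0.le
    have hu : (0:ℝ) < 1 + x ^ α := by linarith
    have hA : 0 ≤ x * (2 * α ^ 2 * x ^ (α - 2) / (1 + x ^ α) ^ 2) := by
      have := Real.rpow_nonneg hx0.le (α - 2)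
      positivity
    have hB : (1 - x ^ α) / (1 + x ^ α) ≤ 0 :=
      div_nonpos_of_nonpos_of_nonneg (by linarith) hu.le
    have hC : 0 ≤ Real.log ((1 + x ^ α) ^ 2) := by
      apply Real.log_nonneg
      nlinarith
    have : x * (2 * α ^ 2 * x ^ (α - 2) / (1 + x ^ α) ^ 2) * ((1 - x ^ α) / (1 + x ^ α)) *
        Real.log ((1 + x ^ α) ^ 2) ≤ 0 :=
      mul_nonpos_of_nonpos_of_nonneg (mul_nonpos_of_nonneg_of_nonpos hA hB) hC
    calc g x = x * (2 * α ^ 2 * x ^ (α - 2) / (1 + x ^ α) ^ 2) * ((1 - x ^ α) / (1 + x ^ α)) *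
        Real.log ((1 + x ^ α) ^ 2) := by rw [hg]; ring
      _ ≤ 0 := this
  have hint : IntegrableOn g (Ioi 0) := by
    rw [← Ioc_union_Ioi_eq_Ioi (zero_le_one : (0:ℝ) ≤ 1)]
    exact hint1.union hint2
  have key := integral_Ioi_of_hasDerivAt_of_tendsto hcont0 hderiv hint htop
  have hF0 : F 0 = 2 * α := by
    rw [hF]
    simp only
    rw [Real.zero_rpow hα0.ne']
    norm_num
    ring
  rw [key, hF0]
  ring

theorem stmt3 (α : ℝ) (hα : 2 ≤ α) :
    ∫ y : EuclideanSpace ℝ (Fin 2),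
      2 * α ^ 2 * ‖y‖ ^ (α - 2) / (1 + ‖y‖ ^ α) ^ 2 * ((1 - ‖y‖ ^ α) / (1 + ‖y‖ ^ α)) *
        Real.log ((1 + ‖y‖ ^ α) ^ 2) = -(4 * π * α) := by
  rw [MeasureTheory.integral_fun_norm_addHaar (volume : Measure (EuclideanSpace ℝ (Fin 2)))
    (fun r => 2 * α ^ 2 * r ^ (α - 2) / (1 + r ^ α) ^ 2 * ((1 - r ^ α) / (1 + r ^ α)) *
      Real.log ((1 + r ^ α) ^ 2))]
  have hdim : Module.finrank ℝ (EuclideanSpace ℝ (Fin 2)) = 2 := finrank_euclideanSpace_fin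
  rw [hdim]
  have hb : (volume (Metric.ball (0 : EuclideanSpace ℝ (Fin 2)) 1)).toReal = π := by
    rw [EuclideanSpace.volume_ball]
    simp only [Fintype.card_fin]
    rw [show ((2:ℕ):ℝ) / 2 + 1 = 2 by norm_num, Real.Gamma_two]
    simp [Real.sq_sqrt Real.pi_nonneg, Real.pi_nonneg]
  rw [measureReal_def, hb]
  have : ∫ r in Ioi (0:ℝ), r ^ (2 - 1) • (2 * α ^ 2 * r ^ (α - 2) / (1 + r ^ α) ^ 2 *
      ((1 - r ^ α) / (1 + r ^ α)) * Real.log ((1 + r ^ α) ^ 2)) = -(2 * α) := by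
    rw [← radial_integral α hα]
    congr 1
    ext r
    simp [pow_one, smul_eq_mul]
  rw [this]
  simp only [nsmul_eq_mul, smul_eq_mul, Nat.cast_ofNat]
  ring
end

section
/- For every real α ≥ 2, ∫_{ℝ²} 2α² |y|^{α-2}/(1+|y|^α)² · (1-|y|^α)/(1+|y|^α) · ln|y| dy = -4π. -/
open Real MeasureTheory
open Set Filter Topology

lemma stmt4_radial (α : ℝ) (hα : 2 ≤ α) :
    ∫ x in Ioi (0:ℝ), x * (2 * α ^ 2 * x ^ (α - 2) / (1 + x ^ α) ^ 2 *
      ((1 - x ^ α) / (1 + x ^ α)) * Real.log x) = -2 := by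
  have hα0 : (0:ℝ) < α := by linarith
  set g : ℝ → ℝ := fun y => 2 * (α * y ^ α * Real.log y / (1 + y ^ α) ^ 2 + (1 + y ^ α)⁻¹)
    with hg
  have hg0 : g 0 = 2 := by
    simp [hg, Real.zero_rpow hα0.ne', Real.log_zero]
  have hderiv : ∀ x ∈ Ioi (0:ℝ), HasDerivAt g
      (x * (2 * α ^ 2 * x ^ (α - 2) / (1 + x ^ α) ^ 2 * ((1 - x ^ α) / (1 + x ^ α)) *
        Real.log x)) x := by
    intro x hx
    have hx : (0:ℝ) < x := hx
    have hxne := hx.ne'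
    have hA : HasDerivAt (fun y : ℝ => y ^ α) (α * x ^ (α - 1)) x :=
      Real.hasDerivAt_rpow_const (Or.inl hxne)
    have hP : HasDerivAt (fun y : ℝ => 1 + y ^ α) (α * x ^ (α - 1)) x := hA.const_add 1
    have hpos : (0:ℝ) < 1 + x ^ α := by positivity
    have hD : HasDerivAt (fun y : ℝ => (1 + y ^ α) ^ 2)
        ((2 : ℕ) * (1 + x ^ α) ^ 1 * (α * x ^ (α - 1))) x := hP.pow 2
    have hN : HasDerivAt (fun y : ℝ => α * y ^ α * Real.log y)
        (α * (α * x ^ (α - 1)) * Real.log x + α * x ^ α * x⁻¹) x :=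
      (hA.const_mul α).mul (Real.hasDerivAt_log hxne)
    have hQ := hN.div hD (by positivity)
    have hI := hP.inv hpos.ne'
    have h := (hQ.add hI).const_mul 2
    refine h.congr_deriv ?_
    symm
    have e2 : x ^ (α - 1) = x ^ (α - 2) * x := by
      rw [show α - 1 = (α - 2) + 1 by ring, Real.rpow_add_one hxne]
    have e1 : x ^ α = x ^ (α - 2) * x * x := by
      conv_lhs => rw [show α = (α - 1) + 1 by ring]
      rw [Real.rpow_add_one hxne, e2]
    rw [e1, e2]
    have h2 : (0:ℝ) < 1 + x ^ (α - 2) * x * x := by rw [← e1]; exact hpos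
    field_simp
    ring
  have hnonpos : ∀ x ∈ Ioi (0:ℝ),
      x * (2 * α ^ 2 * x ^ (α - 2) / (1 + x ^ α) ^ 2 * ((1 - x ^ α) / (1 + x ^ α)) *
        Real.log x) ≤ 0 := by
    intro x hx
    have hx : (0:ℝ) < x := hx
    have hpos : (0:ℝ) < 1 + x ^ α := by positivity
    have key : (1 - x ^ α) * Real.log x ≤ 0 := by
      rcases le_total x 1 with h | h
      · have h1 : x ^ α ≤ 1 := Real.rpow_le_one hx.le h hα0.le
        have h2 : Real.log x ≤ 0 := Real.log_nonpos hx.le h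
        nlinarith
      · have h1 : 1 ≤ x ^ α := Real.one_le_rpow h hα0.le
        have h2 : 0 ≤ Real.log x := Real.log_nonneg h
        nlinarith
    have hc : (0:ℝ) ≤ x * (2 * α ^ 2 * x ^ (α - 2)) / (1 + x ^ α) ^ 2 / (1 + x ^ α) := by
      positivity
    calc x * (2 * α ^ 2 * x ^ (α - 2) / (1 + x ^ α) ^ 2 * ((1 - x ^ α) / (1 + x ^ α)) *
          Real.log x)
        = x * (2 * α ^ 2 * x ^ (α - 2)) / (1 + x ^ α) ^ 2 / (1 + x ^ α) *
          ((1 - x ^ α) * Real.log x) := by ring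
      _ ≤ 0 := mul_nonpos_of_nonneg_of_nonpos hc key
  have hrpow0 : Tendsto (fun x : ℝ => x ^ α) (𝓝[>] (0:ℝ)) (𝓝 0) := by
    have := (Real.continuousAt_rpow_const 0 α (Or.inr hα0.le)).tendsto
    rw [Real.zero_rpow hα0.ne'] at this
    exact this.mono_left nhdsWithin_le_nhds
  have hcont : ContinuousWithinAt g (Ici (0:ℝ)) 0 := by
    rw [ContinuousWithinAt, hg0]
    rw [show Ici (0:ℝ) = {0} ∪ Ioi 0 by
      ext y; simp [le_iff_lt_or_eq, eq_comm, or_comm], nhdsWithin_union, tendsto_sup]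
    constructor
    · rw [nhdsWithin_singleton]
      have : Tendsto g (pure (0:ℝ)) (𝓝 (g 0)) := tendsto_pure_nhds g 0
      rwa [hg0] at this
    · have l2 : Tendsto (fun x : ℝ => Real.log x * x ^ α) (𝓝[>] (0:ℝ)) (𝓝 0) :=
        tendsto_log_mul_rpow_nhdsGT_zero hα0
      have lP : Tendsto (fun x : ℝ => 1 + x ^ α) (𝓝[>] (0:ℝ)) (𝓝 (1 + 0)) :=
        hrpow0.const_add 1
      have T := (((l2.const_mul α).div (lP.pow 2) (by norm_num)).add
        (lP.inv₀ (by norm_num))).const_mul 2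
      have hlim : (2:ℝ) * (α * 0 / (1 + 0) ^ 2 + (1 + 0)⁻¹) = 2 := by norm_num
      rw [hlim] at T
      exact T.congr fun x => by simp only [Pi.div_apply]; rw [hg]; ring
  have hTop : Tendsto g atTop (𝓝 0) := by
    have hP : Tendsto (fun x : ℝ => 1 + x ^ α) atTop atTop :=
      tendsto_atTop_add_const_left _ 1 (tendsto_rpow_atTop hα0)
    have hInv : Tendsto (fun x : ℝ => (1 + x ^ α)⁻¹) atTop (𝓝 0) := hP.inv_tendsto_atTop
    have hratio : Tendsto (fun x : ℝ => x ^ α / (1 + x ^ α)) atTop (𝓝 1) := by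
      have hev : ∀ᶠ x : ℝ in atTop, 1 - (1 + x ^ α)⁻¹ = x ^ α / (1 + x ^ α) := by
        filter_upwards [eventually_gt_atTop (0:ℝ)] with x hx
        have h2 : (0:ℝ) < 1 + x ^ α := by positivity
        field_simp
        ring
      have T : Tendsto (fun x : ℝ => 1 - (1 + x ^ α)⁻¹) atTop (𝓝 (1 - 0)) :=
        tendsto_const_nhds.sub hInv
      rw [sub_zero] at T
      exact T.congr' hev
    have hlog : Tendsto (fun x : ℝ => Real.log x / x ^ α) atTop (𝓝 0) :=
      (isLittleO_log_rpow_atTop hα0).tendsto_div_nhds_zero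
    have hmain : Tendsto (fun x : ℝ => α * x ^ α * Real.log x / (1 + x ^ α) ^ 2)
        atTop (𝓝 0) := by
      have T := (hlog.const_mul α).mul (hratio.pow 2)
      have hval : α * 0 * 1 ^ 2 = 0 := by ring
      rw [hval] at T
      refine T.congr' ?_
      filter_upwards [eventually_gt_atTop (0:ℝ)] with x hx
      have h1 : x ^ α ≠ 0 := (Real.rpow_pos_of_pos hx α).ne'
      have h2 : (0:ℝ) < 1 + x ^ α := by positivity
      field_simp
    have T := (hmain.add hInv).const_mul 2
    have hval : (2:ℝ) * (0 + 0) = 0 := by ring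
    rw [hval] at T
    exact T.congr fun x => by rw [hg]
  have hint := integral_Ioi_of_hasDerivAt_of_nonpos hcont hderiv hnonpos hTop
  rw [hint, hg0]
  norm_num

theorem stmt4 (α : ℝ) (hα : 2 ≤ α) :
    ∫ y : EuclideanSpace ℝ (Fin 2),
      2 * α ^ 2 * ‖y‖ ^ (α - 2) / (1 + ‖y‖ ^ α) ^ 2 * ((1 - ‖y‖ ^ α) / (1 + ‖y‖ ^ α)) *
        Real.log ‖y‖ = -(4 * π) := by
  have hvol : (volume (Metric.ball (0 : EuclideanSpace ℝ (Fin 2)) 1)).toReal = π := by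
    rw [EuclideanSpace.volume_ball]
    simp only [Fintype.card_fin]
    rw [show ((2:ℕ):ℝ) / 2 + 1 = 2 by norm_num, Real.Gamma_two,
      Real.sq_sqrt Real.pi_nonneg]
    simp [ENNReal.toReal_ofReal Real.pi_nonneg]
  have key := MeasureTheory.integral_fun_norm_addHaar
    (volume : Measure (EuclideanSpace ℝ (Fin 2)))
    (fun r : ℝ => 2 * α ^ 2 * r ^ (α - 2) / (1 + r ^ α) ^ 2 *
      ((1 - r ^ α) / (1 + r ^ α)) * Real.log r)
  refine key.trans ?_
  rw [finrank_euclideanSpace_fin, measureReal_def, hvol]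
  have : (∫ y in Ioi (0:ℝ), y ^ (2 - 1) •
      (2 * α ^ 2 * y ^ (α - 2) / (1 + y ^ α) ^ 2 * ((1 - y ^ α) / (1 + y ^ α)) *
        Real.log y)) = -2 := by
    rw [← stmt4_radial α hα]
    refine setIntegral_congr_fun measurableSet_Ioi fun y _ => ?_
    simp [pow_one, smul_eq_mul]
  rw [this]
  simp only [nsmul_eq_mul, smul_eq_mul, Nat.cast_ofNat]
  ring
end

section
/- For every real α ≥ 2, the function Z(y) = (1-|y|^α)/(1+|y|^α) satisfies -ΔZ = 2α² |y|^{α-2}/(1+|y|^α)² · Z on ℝ² \ {0}. -/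
open Real MeasureTheory

lemma hasDerivAt_G (β s : ℝ) (hs : 0 < s) :
    HasDerivAt (fun s : ℝ => (1 - s ^ β) / (1 + s ^ β))
      (-2 * β * s ^ (β - 1) / (1 + s ^ β) ^ 2) s := by
  have hpow : HasDerivAt (fun s : ℝ => s ^ β) (β * s ^ (β - 1)) s :=
    Real.hasDerivAt_rpow_const (Or.inl hs.ne')
  have hden : (0:ℝ) < 1 + s ^ β := by positivity
  have h := ((hasDerivAt_const s (1:ℝ)).sub hpow).div
    ((hasDerivAt_const s (1:ℝ)).add hpow) hden.ne'
  refine h.congr_deriv ?_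
  simp only [Pi.add_apply, Pi.sub_apply]
  field_simp
  ring

lemma hasDerivAt_G' (β s : ℝ) (hs : 0 < s) :
    HasDerivAt (fun s : ℝ => -2 * β * s ^ (β - 1) / (1 + s ^ β) ^ 2)
      (2 * β * s ^ (β - 2) * ((β + 1) * s ^ β - β + 1) / (1 + s ^ β) ^ 3) s := by
  have hpow : HasDerivAt (fun s : ℝ => s ^ β) (β * s ^ (β - 1)) s :=
    Real.hasDerivAt_rpow_const (Or.inl hs.ne')
  have hpow1 : HasDerivAt (fun s : ℝ => s ^ (β - 1)) ((β - 1) * s ^ (β - 1 - 1)) s :=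
    Real.hasDerivAt_rpow_const (Or.inl hs.ne')
  have hden : (0:ℝ) < 1 + s ^ β := by positivity
  have hden2 : (0:ℝ) < (1 + s ^ β) ^ 2 := by positivity
  have hnum : HasDerivAt (fun s : ℝ => -2 * β * s ^ (β - 1))
      (-2 * β * ((β - 1) * s ^ (β - 1 - 1))) s := hpow1.const_mul _
  have hd : HasDerivAt (fun s : ℝ => (1 + s ^ β) ^ 2)
      ((2 : ℕ) * (1 + s ^ β) ^ (2 - 1) * (β * s ^ (β - 1))) s :=
by have h2 : HasDerivAt (fun s : ℝ => (1 + s ^ β) ^ 2) _ s := ((hasDerivAt_const s (1:ℝ)).add hpow).pow 2; simpa using h2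
  have h := hnum.div hd hden2.ne'
  refine h.congr_deriv ?_
  have e1 : s ^ (β - 1) = s ^ (β - 2) * s := by
    rw [show β - 1 = (β - 2) + 1 by ring, Real.rpow_add hs, Real.rpow_one]
  have e2 : s ^ β = s ^ (β - 2) * s ^ (2:ℕ) := by
    rw [show β = (β - 2) + ((2:ℕ):ℝ) by push_cast; ring, Real.rpow_add hs, Real.rpow_natCast]; norm_num
  have e3 : s ^ (β - 1 - 1) = s ^ (β - 2) := by ring_nf
  rw [e3, e1, e2]
  field_simp
  ring

lemma key_second_deriv (β s0 b : ℝ) (hs0 : 0 < s0) (f : ℝ → ℝ)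
    (hf : ∀ t, f t = (1 - (s0 + 2*b*t + t^2) ^ β) / (1 + (s0 + 2*b*t + t^2) ^ β)) :
    iteratedDeriv 2 f 0 =
      2*β*s0^(β-2)*((β+1)*s0^β - β + 1)/(1+s0^β)^3 * (2*b)^2
        + (-2*β*s0^(β-1)/(1+s0^β)^2) * 2 := by
  set q : ℝ → ℝ := fun t => s0 + 2*b*t + t^2 with hqdef
  have hq : ∀ t : ℝ, HasDerivAt q (2*b + 2*t) t := by
    intro t
    have h1 : HasDerivAt (fun t : ℝ => s0 + 2*b*t + t^2) (2*b*1 + 2*t) t :=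
      (((hasDerivAt_id t).const_mul (2*b)).const_add s0).add
        (by simpa using hasDerivAt_pow 2 t)
    simpa using h1
  have hq0 : q 0 = s0 := by simp [hqdef]
  have hqcont : ContinuousAt q 0 := by fun_prop
  have hpos : ∀ᶠ t in nhds (0:ℝ), 0 < q t :=
    ContinuousAt.eventually_lt continuousAt_const hqcont (by simpa [hq0] using hs0)
  have hfc : f = (fun s : ℝ => (1 - s ^ β) / (1 + s ^ β)) ∘ q := funext fun t => hf t
  have hderiv : ∀ t : ℝ, 0 < q t →
      HasDerivAt f (-2*β*(q t)^(β-1)/(1+(q t)^β)^2 * (2*b+2*t)) t := by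
    intro t ht
    rw [hfc]
    exact (hasDerivAt_G β (q t) ht).comp t (hq t)
  have hEq : deriv f =ᶠ[nhds (0:ℝ)]
      fun t => -2*β*(q t)^(β-1)/(1+(q t)^β)^2 * (2*b+2*t) :=
    hpos.mono fun t ht => (hderiv t ht).deriv
  rw [show (2:ℕ) = 1 + 1 from rfl, iteratedDeriv_succ, iteratedDeriv_one]
  rw [Filter.EventuallyEq.deriv_eq hEq]
  have hlin : HasDerivAt (fun t : ℝ => 2*b + 2*t) 2 (0:ℝ) := by
    simpa using ((hasDerivAt_id (0:ℝ)).const_mul 2).const_add (2*b)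
  have hcomp : HasDerivAt (fun t : ℝ => -2*β*(q t)^(β-1)/(1+(q t)^β)^2)
      (2*β*s0^(β-2)*((β+1)*s0^β - β + 1)/(1+s0^β)^3 * (2*b+2*0)) 0 := by
    have := (hasDerivAt_G' β (q 0) (by rw [hq0]; exact hs0)).comp 0 (hq 0)
    rw [hq0] at this
    exact this
  have hmul : HasDerivAt (fun t : ℝ => -2*β*(q t)^(β-1)/(1+(q t)^β)^2 * (2*b+2*t)) _ 0 :=
    hcomp.mul hlin
  rw [hmul.deriv]
  rw [hq0]
  ring

noncomputable def laplacian (f : EuclideanSpace ℝ (Fin 2) → ℝ)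
    (x : EuclideanSpace ℝ (Fin 2)) : ℝ :=
  ∑ i : Fin 2, iteratedDeriv 2 (fun t : ℝ => f (x + t • EuclideanSpace.single i (1 : ℝ))) 0

theorem stmt5 (α : ℝ) (hα : 2 ≤ α)
    (Z : EuclideanSpace ℝ (Fin 2) → ℝ)
    (hZ : ∀ y, Z y = (1 - ‖y‖ ^ α) / (1 + ‖y‖ ^ α)) :
    ∀ y : EuclideanSpace ℝ (Fin 2), y ≠ 0 →
      -laplacian Z y = 2 * α ^ 2 * ‖y‖ ^ (α - 2) / (1 + ‖y‖ ^ α) ^ 2 * Z y := by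
  intro y hy
  have hαpos : (0:ℝ) < α := lt_of_lt_of_le (by norm_num) hα
  set r : ℝ := ‖y‖ with hrdef
  have hr : 0 < r := by simpa [hrdef] using norm_pos_iff.mpr hy
  set β : ℝ := α / 2 with hβdef
  set s0 : ℝ := r ^ 2 with hs0def
  have hs0 : 0 < s0 := by positivity
  -- half-power rewriting
  have pow_half : ∀ x : ℝ, 0 ≤ x → x ^ α = (x ^ 2) ^ β := by
    intro x hx
    rw [← Real.rpow_natCast x 2, ← Real.rpow_mul hx]
    congr 1
    push_cast
    rw [hβdef]; ring
  -- per-coordinate formula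
  have hf : ∀ i : Fin 2, ∀ t : ℝ,
      Z (y + t • EuclideanSpace.single i (1:ℝ)) =
        (1 - (s0 + 2*(y i)*t + t^2) ^ β) / (1 + (s0 + 2*(y i)*t + t^2) ^ β) := by
    intro i t
    have hn : ‖y + t • EuclideanSpace.single i (1:ℝ)‖ ^ 2 = s0 + 2*(y i)*t + t^2 := by
      rw [norm_add_sq_real]
      have h1 : (inner ℝ y (t • EuclideanSpace.single i (1:ℝ)) : ℝ) = t * y i := by
        rw [real_inner_smul_right, EuclideanSpace.inner_single_right]
        simp
      have h2 : ‖t • EuclideanSpace.single i (1:ℝ)‖ ^ 2 = t ^ 2 := by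
        rw [norm_smul, EuclideanSpace.norm_single]
        simp [Real.norm_eq_abs, mul_pow, sq_abs]
      rw [h1, h2, hs0def, hrdef]
      ring
    rw [hZ, pow_half _ (norm_nonneg _), hn]
  have hkey : ∀ i : Fin 2,
      iteratedDeriv 2 (fun t : ℝ => Z (y + t • EuclideanSpace.single i (1:ℝ))) 0 =
        2*β*s0^(β-2)*((β+1)*s0^β - β + 1)/(1+s0^β)^3 * (2*(y i))^2
          + (-2*β*s0^(β-1)/(1+s0^β)^2) * 2 :=
    fun i => key_second_deriv β s0 (y i) hs0 _ (hf i)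
  have hnorm : (y 0) ^ 2 + (y 1) ^ 2 = s0 := by
    rw [hs0def, hrdef, EuclideanSpace.norm_eq, Real.sq_sqrt (by positivity)]
    simp [Fin.sum_univ_two, Real.norm_eq_abs, sq_abs]
  have hlap : laplacian Z y =
      4 * s0 * (2*β*s0^(β-2)*((β+1)*s0^β - β + 1)/(1+s0^β)^3)
        + 4 * (-2*β*s0^(β-1)/(1+s0^β)^2) := by
    rw [laplacian, Fin.sum_univ_two, hkey 0, hkey 1]
    set G2 := 2*β*s0^(β-2)*((β+1)*s0^β - β + 1)/(1+s0^β)^3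
    set G1 := -2*β*s0^(β-1)/(1+s0^β)^2
    linear_combination (4 * G2) * hnorm
  rw [hlap, hZ y, ← hrdef]
  -- rpow conversions
  have hA : s0 ^ β = r ^ α := by
    rw [hs0def, ← Real.rpow_natCast r 2, ← Real.rpow_mul hr.le]
    congr 1; push_cast; rw [hβdef]; ring
  have hB : s0 ^ (β - 1) = r ^ (α - 2) := by
    rw [hs0def, ← Real.rpow_natCast r 2, ← Real.rpow_mul hr.le]
    congr 1; push_cast; rw [hβdef]; ring
  have hD : s0 ^ (β - 2) = r ^ (α - 4) := by
    rw [hs0def, ← Real.rpow_natCast r 2, ← Real.rpow_mul hr.le]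
    congr 1; push_cast; rw [hβdef]; ring
  have hE : r ^ (α - 2) = r ^ (α - 4) * r ^ (4:ℕ) / r ^ (2:ℕ) := by
    rw [← Real.rpow_natCast r 4, ← Real.rpow_natCast r 2,
      ← Real.rpow_add hr, ← Real.rpow_sub hr]
    congr 1; push_cast; ring
  have hF : r ^ α = r ^ (α - 4) * r ^ (4:ℕ) := by
    rw [← Real.rpow_natCast r 4, ← Real.rpow_add hr]
    congr 1; push_cast; ring
  have hApos : 0 < r ^ (α - 4) := Real.rpow_pos_of_pos hr _
  rw [hA, hB, hD, hE, hF, hs0def, hβdef]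
  have hden : (0:ℝ) < 1 + r ^ (α - 4) * r ^ (4:ℕ) := by positivity
  field_simp
  ring
end
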